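/- arXiv:1411.5423 — 3 statements merged into one kernel-verified Lean document; each statement's English description precedes it below -/
import Mathlib

section
/- Let J : ℝⁿ → ℝ be continuous, nonnegative, symmetric, compactly supported, with ∫ J = J̄ > 0, and suppose J ≥ A > 0 on the ball B(0, r₁). Let w : ℝⁿ → ℝ be bounded below on a ball U₁ ⊂ B(z, r̄) of radius r₁/2 with ∫_{U₁} exp(w(y)) dy ≥ C₄ > 0, and let z_min be a point where w attains its minimum over the closure of U₁. If w(z_min) → -∞ along a sequence, then Φ(z_min) := ∫ J(y) exp(-y⋅p) exp(w(z_min - y) - w(z_min)) dy → +∞ along that sequence, for any fixed p ∈ ℝⁿ. -/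
open MeasureTheory Filter

theorem stmt_7 (n : ℕ) (J : EuclideanSpace ℝ (Fin n) → ℝ)
    (rbar r₁ A Jbar C₄ : ℝ) (hr₁ : 0 < r₁) (hA : 0 < A) (hC₄ : 0 < C₄)
    (hcont : Continuous J) (hnonneg : ∀ y, 0 ≤ J y) (hsymm : ∀ y, J y = J (-y))
    (hsupp : Function.support J ⊆ Metric.ball 0 rbar)
    (hJbar : ∫ y, J y = Jbar) (hJbarpos : 0 < Jbar)
    (hAbd : ∀ y ∈ Metric.ball (0 : EuclideanSpace ℝ (Fin n)) r₁, A ≤ J y)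
    (p z c : EuclideanSpace ℝ (Fin n))
    (U₁ : Set (EuclideanSpace ℝ (Fin n))) (hU₁ : U₁ = Metric.ball c (r₁ / 2))
    (hU₁sub : U₁ ⊆ Metric.ball z rbar)
    (w : ℕ → EuclideanSpace ℝ (Fin n) → ℝ) (hwcont : ∀ k, Continuous (w k))
    (hint : ∀ k, ∫⁻ y in U₁, ENNReal.ofReal (Real.exp (w k y)) ≥ ENNReal.ofReal C₄)
    (zmin : ℕ → EuclideanSpace ℝ (Fin n))
    (hzmin : ∀ k, zmin k ∈ closure U₁ ∧ ∀ y ∈ closure U₁, w k (zmin k) ≤ w k y)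
    (hblow : Tendsto (fun k => w k (zmin k)) atTop atBot) :
    Tendsto (fun k => ∫⁻ y, ENNReal.ofReal
        (J y * Real.exp (-(inner ℝ y p : ℝ)) *
          Real.exp (w k (zmin k - y) - w k (zmin k))))
      atTop (nhds ⊤) := by
  set κ : ℝ := A * Real.exp (-(r₁ * ‖p‖)) with hκ
  have hκpos : 0 < κ := mul_pos hA (Real.exp_pos _)
  -- lower bound for each k
  have key : ∀ k, ENNReal.ofReal κ * ENNReal.ofReal C₄ *
      ENNReal.ofReal (Real.exp (-(w k (zmin k)))) ≤
      ∫⁻ y, ENNReal.ofReal (J y * Real.exp (-(inner ℝ y p : ℝ)) *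
        Real.exp (w k (zmin k - y) - w k (zmin k))) := by
    intro k
    set a := zmin k with ha
    have hamem : a ∈ Metric.closedBall c (r₁ / 2) := by
      have := (hzmin k).1
      rw [hU₁] at this
      exact Metric.closure_ball_subset_closedBall this
    set S : Set (EuclideanSpace ℝ (Fin n)) := (fun y => a - y) ⁻¹' U₁ with hS
    have hSnorm : ∀ y ∈ S, ‖y‖ < r₁ := by
      intro y hy
      have h1 : dist (a - y) c < r₁ / 2 := by
        have := hy; rw [hS, Set.mem_preimage, hU₁] at this; exact this
      have h2 : dist a c ≤ r₁ / 2 := hamem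
      have h3 : ‖y‖ = dist a (a - y) := by
        rw [dist_eq_norm]; simp
      rw [h3]
      calc dist a (a - y) ≤ dist a c + dist c (a - y) := dist_triangle _ _ _
        _ < r₁ / 2 + r₁ / 2 := by
            rw [dist_comm c (a - y)]; exact add_lt_add_of_le_of_lt h2 h1
        _ = r₁ := by ring
    -- pointwise bound on S
    have hpt : ∀ y ∈ S,
        ENNReal.ofReal κ * ENNReal.ofReal (Real.exp (w k (a - y))) *
          ENNReal.ofReal (Real.exp (-(w k a))) ≤
        ENNReal.ofReal (J y * Real.exp (-(inner ℝ y p : ℝ)) *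
          Real.exp (w k (a - y) - w k a)) := by
      intro y hy
      have hJy : A ≤ J y := hAbd y (by simpa using hSnorm y hy)
      have hip : -(r₁ * ‖p‖) ≤ -(inner ℝ y p : ℝ) := by
        have h1 : (inner ℝ y p : ℝ) ≤ ‖y‖ * ‖p‖ := real_inner_le_norm y p
        have h2 : ‖y‖ * ‖p‖ ≤ r₁ * ‖p‖ :=
          mul_le_mul_of_nonneg_right (hSnorm y hy).le (norm_nonneg p)
        linarith
      have hsplit : J y * Real.exp (-(inner ℝ y p : ℝ)) *
          Real.exp (w k (a - y) - w k a)
          = (J y * Real.exp (-(inner ℝ y p : ℝ))) * Real.exp (w k (a - y)) *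
            Real.exp (-(w k a)) := by
        rw [sub_eq_add_neg, Real.exp_add]; ring
      have h1 : (0:ℝ) ≤ J y * Real.exp (-(inner ℝ y p : ℝ)) * Real.exp (w k (a - y)) :=
        mul_nonneg (mul_nonneg (hnonneg y) (Real.exp_pos _).le) (Real.exp_pos _).le
      have hmain : ENNReal.ofReal κ ≤
          ENNReal.ofReal (J y * Real.exp (-(inner ℝ y p : ℝ))) := by
        apply ENNReal.ofReal_le_ofReal
        rw [hκ]
        exact mul_le_mul hJy (Real.exp_le_exp.2 hip) (Real.exp_pos _).le
          (hA.trans_le hJy).le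
      rw [hsplit, ENNReal.ofReal_mul h1,
        ENNReal.ofReal_mul (mul_nonneg (hnonneg y) (Real.exp_pos _).le)]
      exact mul_le_mul_left (mul_le_mul_left hmain _) _
    -- change of variables
    have hmp : MeasurePreserving (fun y : EuclideanSpace ℝ (Fin n) => a - y)
        volume volume := Measure.measurePreserving_sub_left volume a
    have hemb : MeasurableEmbedding (fun y : EuclideanSpace ℝ (Fin n) => a - y) :=
      (MeasurableEquiv.subLeft a).measurableEmbedding
    have hcov : (∫⁻ y in S, ENNReal.ofReal (Real.exp (w k (a - y))))
        = ∫⁻ x in U₁, ENNReal.ofReal (Real.exp (w k x)) :=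
      hmp.setLIntegral_comp_preimage_emb hemb
        (fun x => ENNReal.ofReal (Real.exp (w k x))) U₁
    calc ENNReal.ofReal κ * ENNReal.ofReal C₄ *
          ENNReal.ofReal (Real.exp (-(w k a)))
        ≤ ENNReal.ofReal κ *
            (∫⁻ y in S, ENNReal.ofReal (Real.exp (w k (a - y)))) *
            ENNReal.ofReal (Real.exp (-(w k a))) := by
          gcongr
          rw [hcov]; exact hint k
      _ = (∫⁻ y in S, ENNReal.ofReal κ * ENNReal.ofReal (Real.exp (w k (a - y))) *
            ENNReal.ofReal (Real.exp (-(w k a)))) := by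
          rw [lintegral_mul_const' _ _ ENNReal.ofReal_ne_top,
            lintegral_const_mul' _ _ ENNReal.ofReal_ne_top]
      _ ≤ (∫⁻ y in S, ENNReal.ofReal (J y * Real.exp (-(inner ℝ y p : ℝ)) *
            Real.exp (w k (a - y) - w k a))) := by
          apply setLIntegral_mono_ae
          · apply Measurable.aemeasurable
            apply ENNReal.measurable_ofReal.comp
            apply Measurable.mul
            · exact hcont.measurable.mul (Real.measurable_exp.comp
                ((measurable_id.inner measurable_const).neg))
            · exact Real.measurable_exp.comp
                (((hwcont k).measurable.comp
                  (measurable_const.sub measurable_id)).sub measurable_const)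
          · exact Filter.Eventually.of_forall hpt
      _ ≤ ∫⁻ y, ENNReal.ofReal (J y * Real.exp (-(inner ℝ y p : ℝ)) *
            Real.exp (w k (a - y) - w k a)) := setLIntegral_le_lintegral _ _
  -- the lower bound tends to ⊤
  have hlb : Tendsto (fun k => ENNReal.ofReal κ * ENNReal.ofReal C₄ *
      ENNReal.ofReal (Real.exp (-(w k (zmin k))))) atTop (nhds ⊤) := by
    have h1 : Tendsto (fun k => Real.exp (-(w k (zmin k)))) atTop atTop :=
      Real.tendsto_exp_atTop.comp (tendsto_neg_atBot_atTop.comp hblow)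
    have h2 : Tendsto (fun k => ENNReal.ofReal (Real.exp (-(w k (zmin k)))))
        atTop (nhds ⊤) := ENNReal.tendsto_ofReal_atTop.comp h1
    have hne : ENNReal.ofReal κ * ENNReal.ofReal C₄ ≠ 0 := by
      simp only [ne_eq, mul_eq_zero, ENNReal.ofReal_eq_zero, not_or, not_le]
      exact ⟨hκpos, hC₄⟩
    have h3 : Tendsto (fun k => (ENNReal.ofReal κ * ENNReal.ofReal C₄) *
        ENNReal.ofReal (Real.exp (-(w k (zmin k))))) atTop
        (nhds ((ENNReal.ofReal κ * ENNReal.ofReal C₄) * ⊤)) :=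
      ENNReal.Tendsto.const_mul h2 (Or.inl (by simp))
    rw [ENNReal.mul_top hne] at h3
    simpa [mul_assoc] using h3
  exact tendsto_nhds_top_mono hlb (Filter.Eventually.of_forall key)
end

section
/- Suppose u, v : ℝⁿ → ℝ are measurable, v is such that z ↦ ∫ J(y) exp(-y⋅p) exp(v(z-y) - v(z)) dy is bounded above by a constant C uniformly in z, and there exist a point z₀ and γ > 0 with u(z) - u(z₀) ≤ v(z) - v(z₀) + γ for all z in the domain of integration. If additionally ∫ J(y) exp(-y⋅p) exp(u(z₀-y) - u(z₀)) dy ≥ ∫ J(y) exp(-y⋅p) exp(v(z₀-y) - v(z₀)) dy + ε₂ for some ε₂ > 0, then (exp(γ) - 1) · C ≥ ε₂; in particular, if γ < log(1 + ε₂/C), this is a contradiction. -/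
open MeasureTheory

theorem stmt_8 (n : ℕ) (J : EuclideanSpace ℝ (Fin n) → ℝ)
    (hnonneg : ∀ y, 0 ≤ J y) (hint : Integrable J)
    (p z₀ : EuclideanSpace ℝ (Fin n)) (u v : EuclideanSpace ℝ (Fin n) → ℝ)
    (C γ ε₂ : ℝ) (hC : 0 ≤ C) (hγ : 0 < γ) (hε₂ : 0 < ε₂)
    (hbound : ∀ z, ∫⁻ y, ENNReal.ofReal
        (J y * Real.exp (-(inner ℝ y p : ℝ)) * Real.exp (v (z - y) - v z)) ≤
      ENNReal.ofReal C)
    (hslope : ∀ z, u z - u z₀ ≤ v z - v z₀ + γ)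
    (hsub : ∫⁻ y, ENNReal.ofReal
        (J y * Real.exp (-(inner ℝ y p : ℝ)) * Real.exp (u (z₀ - y) - u z₀)) ≥
      (∫⁻ y, ENNReal.ofReal
        (J y * Real.exp (-(inner ℝ y p : ℝ)) * Real.exp (v (z₀ - y) - v z₀))) +
        ENNReal.ofReal ε₂) :
    (Real.exp γ - 1) * C ≥ ε₂ := by
  set Iv := ∫⁻ y, ENNReal.ofReal
      (J y * Real.exp (-(inner ℝ y p : ℝ)) * Real.exp (v (z₀ - y) - v z₀)) with hIv
  set Iu := ∫⁻ y, ENNReal.ofReal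
      (J y * Real.exp (-(inner ℝ y p : ℝ)) * Real.exp (u (z₀ - y) - u z₀)) with hIu
  have h1 : Iu ≤ ENNReal.ofReal (Real.exp γ) * Iv := by
    rw [hIu, hIv, ← lintegral_const_mul' _ _ ENNReal.ofReal_ne_top]
    refine lintegral_mono fun y => ?_
    rw [← ENNReal.ofReal_mul (Real.exp_pos γ).le]
    apply ENNReal.ofReal_le_ofReal
    have hs : u (z₀ - y) - u z₀ ≤ v (z₀ - y) - v z₀ + γ := hslope (z₀ - y)
    have he : Real.exp (u (z₀ - y) - u z₀) ≤ Real.exp γ * Real.exp (v (z₀ - y) - v z₀) := by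
      rw [← Real.exp_add]
      exact Real.exp_le_exp.mpr (by linarith)
    have hJ : 0 ≤ J y * Real.exp (-(inner ℝ y p : ℝ)) :=
      mul_nonneg (hnonneg y) (Real.exp_pos _).le
    nlinarith [mul_le_mul_of_nonneg_left he hJ]
  have hfinv : Iv ≠ ⊤ := ((hbound z₀).trans_lt ENNReal.ofReal_lt_top).ne
  have h2 : Iv + ENNReal.ofReal ε₂ ≤ ENNReal.ofReal (Real.exp γ) * Iv := le_trans hsub h1
  have hrt : ENNReal.ofReal (Real.exp γ) * Iv ≠ ⊤ :=
    ENNReal.mul_ne_top ENNReal.ofReal_ne_top hfinv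
  have h3 : Iv.toReal + ε₂ ≤ Real.exp γ * Iv.toReal := by
    have := ENNReal.toReal_mono hrt h2
    rwa [ENNReal.toReal_add hfinv ENNReal.ofReal_ne_top, ENNReal.toReal_mul,
      ENNReal.toReal_ofReal hε₂.le, ENNReal.toReal_ofReal (Real.exp_pos γ).le] at this
  have h4 : Iv.toReal ≤ C := by
    have := ENNReal.toReal_mono ENNReal.ofReal_ne_top (hbound z₀)
    rwa [ENNReal.toReal_ofReal hC] at this
  have h5 : (0:ℝ) ≤ Iv.toReal := ENNReal.toReal_nonneg
  have he1 : 1 ≤ Real.exp γ := Real.one_le_exp hγ.le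
  nlinarith [mul_le_mul_of_nonneg_left h4 (by linarith : (0:ℝ) ≤ Real.exp γ - 1)]
end

section
/- Let a₁ > 0 and define ũ : ℝⁿ → ℝ by ũ(z) = -a₁|z|. Suppose J is as in the paper's assumptions with J ≥ A > 0 on B(0, r₁), supported in B(0,1). Then for every z with |z| ≥ 1, the set A_z = { y ∈ B(z, 1) : |y| ≤ |z| - 1/2 } has Lebesgue measure bounded below by a positive constant c uniform in z, and consequently ∫_{B(0,1)} J(y) exp(a₁(|z| - |z - y|)) dy ≥ c·A·exp(a₁/2). -/
open MeasureTheory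

theorem stmt_10 (n : ℕ) (hn : 1 ≤ n) (a₁ A r₁ : ℝ) (ha₁ : 0 < a₁)
    (hA : 0 < A) (hr₁ : 0 < r₁)
    (J : EuclideanSpace ℝ (Fin n) → ℝ) (hcont : Continuous J)
    (hnonneg : ∀ y, 0 ≤ J y)
    (hsupp : Function.support J ⊆ Metric.ball 0 1)
    (hAbd : ∀ y ∈ Metric.ball (0 : EuclideanSpace ℝ (Fin n)) r₁, A ≤ J y) :
    ∃ c : ℝ, 0 < c ∧ ∀ z : EuclideanSpace ℝ (Fin n), 1 ≤ ‖z‖ →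
      ENNReal.ofReal c ≤
        volume {y | y ∈ Metric.ball z 1 ∧ ‖y‖ ≤ ‖z‖ - 1/2} ∧
      ∫⁻ y in Metric.ball (0 : EuclideanSpace ℝ (Fin n)) 1,
          ENNReal.ofReal (J y * Real.exp (a₁ * (‖z‖ - ‖z - y‖))) ≥
        ENNReal.ofReal (c * A * Real.exp (a₁ / 2)) := by
  have hball4 : volume (Metric.ball (0 : EuclideanSpace ℝ (Fin n)) (1/4)) ≠ ⊤ :=
    measure_ball_lt_top.ne
  set c₀ : ℝ := (volume (Metric.ball (0 : EuclideanSpace ℝ (Fin n)) (1/4))).toReal with hc₀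
  have hc₀pos : 0 < c₀ :=
    ENNReal.toReal_pos (Metric.measure_ball_pos volume 0 (by norm_num)).ne' hball4
  set r : ℝ := min r₁ 1 / 2 with hrdef
  have hrpos : 0 < r := by
    have := lt_min hr₁ one_pos
    positivity
  have hrr₁ : r ≤ r₁ := by
    have := min_le_left r₁ 1
    simp only [hrdef]; linarith
  have hr1 : r ≤ 1 := by
    have := min_le_right r₁ 1
    simp only [hrdef]; linarith
  have hballr : volume (Metric.ball (0 : EuclideanSpace ℝ (Fin n)) r) ≠ ⊤ :=
    measure_ball_lt_top.ne
  set v : ℝ := (volume (Metric.ball (0 : EuclideanSpace ℝ (Fin n)) r)).toReal with hv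
  have hvpos : 0 < v := ENNReal.toReal_pos (Metric.measure_ball_pos volume 0 hrpos).ne' hballr
  set c : ℝ := min c₀ (v * Real.exp (-(3 * a₁) / 2)) with hc
  have hcpos : 0 < c := lt_min hc₀pos (by positivity)
  refine ⟨c, hcpos, fun z hz => ?_⟩
  have hznorm : (0 : ℝ) < ‖z‖ := lt_of_lt_of_le one_pos hz
  constructor
  · -- measure bound
    set w : EuclideanSpace ℝ (Fin n) := (1 - 3 / (4 * ‖z‖)) • z with hw
    have h34 : 3 / (4 * ‖z‖) ≤ 3 / 4 := by
      rw [div_le_div_iff₀ (by positivity) (by norm_num)]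
      nlinarith
    have hwz : ‖w - z‖ = 3 / 4 := by
      have h1 : w - z = (1 - 3 / (4 * ‖z‖) - 1) • z := by
        rw [sub_smul, one_smul, hw]
      have h2 : |1 - 3 / (4 * ‖z‖) - 1| = 3 / (4 * ‖z‖) := by
        have h0 : 0 < 3 / (4 * ‖z‖) := by positivity
        rw [abs_of_nonpos (by linarith)]
        ring
      rw [h1, norm_smul, Real.norm_eq_abs, h2]
      field_simp
    have hwn : ‖w‖ = ‖z‖ - 3 / 4 := by
      rw [hw, norm_smul, Real.norm_eq_abs, abs_of_nonneg (by linarith)]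
      field_simp
    have hsub : Metric.ball w (1/4) ⊆
        {y | y ∈ Metric.ball z 1 ∧ ‖y‖ ≤ ‖z‖ - 1/2} := by
      intro y hy
      have hyw : ‖y - w‖ < 1/4 := by
        rw [Metric.mem_ball, dist_eq_norm] at hy; exact hy
      constructor
      · rw [Metric.mem_ball, dist_eq_norm]
        calc ‖y - z‖ = ‖(y - w) + (w - z)‖ := by abel_nf
          _ ≤ ‖y - w‖ + ‖w - z‖ := norm_add_le _ _
          _ < 1 := by rw [hwz]; linarith
      · calc ‖y‖ = ‖(y - w) + w‖ := by rw [sub_add_cancel]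
          _ ≤ ‖y - w‖ + ‖w‖ := norm_add_le _ _
          _ ≤ ‖z‖ - 1/2 := by rw [hwn]; linarith
    calc ENNReal.ofReal c ≤ ENNReal.ofReal c₀ :=
          ENNReal.ofReal_le_ofReal (min_le_left _ _)
      _ = volume (Metric.ball (0 : EuclideanSpace ℝ (Fin n)) (1/4)) := by
          rw [hc₀, ENNReal.ofReal_toReal hball4]
      _ = volume (Metric.ball w (1/4)) := (Measure.addHaar_ball_center volume w _).symm
      _ ≤ volume {y | y ∈ Metric.ball z 1 ∧ ‖y‖ ≤ ‖z‖ - 1/2} := measure_mono hsub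
  · -- integral bound
    have hlow : ∀ y ∈ Metric.ball (0 : EuclideanSpace ℝ (Fin n)) r,
        ENNReal.ofReal (A * Real.exp (-a₁)) ≤
          ENNReal.ofReal (J y * Real.exp (a₁ * (‖z‖ - ‖z - y‖))) := by
      intro y hy
      apply ENNReal.ofReal_le_ofReal
      have hyn : ‖y‖ < r := by rw [Metric.mem_ball, dist_zero_right] at hy; exact hy
      have hJ : A ≤ J y := hAbd y (by
        rw [Metric.mem_ball, dist_zero_right]; linarith)
      have hexp : Real.exp (-a₁) ≤ Real.exp (a₁ * (‖z‖ - ‖z - y‖)) := by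
        apply Real.exp_le_exp.mpr
        have h1 : ‖z - y‖ ≤ ‖z‖ + ‖y‖ := norm_sub_le _ _
        nlinarith
      exact mul_le_mul hJ hexp (Real.exp_pos _).le (by linarith)
    calc ∫⁻ y in Metric.ball (0 : EuclideanSpace ℝ (Fin n)) 1,
          ENNReal.ofReal (J y * Real.exp (a₁ * (‖z‖ - ‖z - y‖)))
        ≥ ∫⁻ y in Metric.ball (0 : EuclideanSpace ℝ (Fin n)) r,
          ENNReal.ofReal (J y * Real.exp (a₁ * (‖z‖ - ‖z - y‖))) := by
          apply lintegral_mono_set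
          exact Metric.ball_subset_ball hr1
      _ ≥ ∫⁻ _ in Metric.ball (0 : EuclideanSpace ℝ (Fin n)) r,
          ENNReal.ofReal (A * Real.exp (-a₁)) :=
          setLIntegral_mono' measurableSet_ball hlow
      _ = ENNReal.ofReal (A * Real.exp (-a₁)) *
          volume (Metric.ball (0 : EuclideanSpace ℝ (Fin n)) r) := by
          rw [setLIntegral_const]
      _ = ENNReal.ofReal (A * Real.exp (-a₁)) * ENNReal.ofReal v := by
          rw [hv, ENNReal.ofReal_toReal hballr]
      _ = ENNReal.ofReal (A * Real.exp (-a₁) * v) := by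
          rw [← ENNReal.ofReal_mul (by positivity : (0:ℝ) ≤ A * Real.exp (-a₁))]
      _ ≥ ENNReal.ofReal (c * A * Real.exp (a₁ / 2)) := by
          apply ENNReal.ofReal_le_ofReal
          have hcle : c ≤ v * Real.exp (-(3 * a₁) / 2) := min_le_right _ _
          have hkey : c * Real.exp (a₁ / 2) ≤ v * Real.exp (-a₁) := by
            calc c * Real.exp (a₁ / 2)
                ≤ v * Real.exp (-(3 * a₁) / 2) * Real.exp (a₁ / 2) := by
                  apply mul_le_mul_of_nonneg_right hcle (Real.exp_pos _).le
              _ = v * Real.exp (-a₁) := by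
                  rw [mul_assoc, ← Real.exp_add]; ring_nf
          nlinarith [Real.exp_pos (a₁ / 2), Real.exp_pos (-a₁)]
end
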